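/- Let R be a Noetherian ring with identity and let g : F₂ → F₁ and h : F₂ → F₃ be surjective homomorphisms of finitely generated projective R-modules such that F₂/(ker(g) + ker(h)) is projective. Then ker(g)/(ker(g) ∩ ker(h)) and ker(h)/(ker(g) ∩ ker(h)) are projective, and F₂ admits an internal direct sum decomposition F₂ = (ker(g) ∩ ker(h)) ⊕ G ⊕ K ⊕ H with ker(g) = (ker(g) ∩ ker(h)) ⊕ G, ker(h) = (ker(g) ∩ ker(h)) ⊕ K, F₁ ≅ K ⊕ H, and F₃ ≅ G ⊕ H. -/

import Mathlib

/-- If the quotient by a submodule is projective, the submodule has a complement. -/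
theorem aux_exists_isCompl {R M : Type*} [Ring R] [AddCommGroup M] [Module R M]
    (p : Submodule R M) (hp : Module.Projective R (M ⧸ p)) : ∃ q, IsCompl p q := by
  obtain ⟨s, hs⟩ := Module.projective_lifting_property p.mkQ (LinearMap.id (M := M ⧸ p))
    p.mkQ_surjective
  have hmem : ∀ x : M, x - s (p.mkQ x) ∈ p := by
    intro x
    rw [← Submodule.Quotient.mk_eq_zero (p := p)]
    have : p.mkQ (s (p.mkQ x)) = p.mkQ x := by
      have := congrArg (fun f => f (p.mkQ x)) hs
      simpa using this
    simp [Submodule.mkQ_apply] at this ⊢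
    simpa [Submodule.Quotient.mk_sub] using sub_eq_zero.mpr this.symm
  let f : M →ₗ[R] p := LinearMap.codRestrict p (LinearMap.id - s ∘ₗ p.mkQ) (fun x => hmem x)
  have hf : ∀ x : p, f x = x := by
    intro x
    ext
    simp only [f, LinearMap.codRestrict_apply, LinearMap.sub_apply, LinearMap.id_apply,
      LinearMap.comp_apply]
    have : p.mkQ (x : M) = 0 := (Submodule.Quotient.mk_eq_zero p).mpr x.2
    rw [this, map_zero, sub_zero]
  exact ⟨LinearMap.ker f, LinearMap.isCompl_of_proj hf⟩

/-- A submodule with a complement in a projective module is projective. -/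
theorem aux_proj_of_isCompl {R M : Type*} [Ring R] [AddCommGroup M] [Module R M]
    [Module.Projective R M] (p q : Submodule R M) (hpq : IsCompl p q) :
    Module.Projective R p :=
  Module.Projective.of_split p.subtype (Submodule.projectionOnto (p := p) (q := q) hpq)
    (by ext x; simp [Submodule.projectionOnto_apply_left])

/-- The sup of two disjoint submodules is equivalent to their product. -/
noncomputable def auxSupEquivProd {R M : Type*} [Ring R] [AddCommGroup M] [Module R M]
    (p q : Submodule R M) (hd : p ⊓ q = ⊥) : (↥(p ⊔ q)) ≃ₗ[R] p × q := by
  set P := p.comap (p ⊔ q).subtype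
  set Q := q.comap (p ⊔ q).subtype
  have hinj : Function.Injective (p ⊔ q).subtype := Subtype.coe_injective
  have hP : Submodule.map (p ⊔ q).subtype P = p := by
    rw [Submodule.map_comap_subtype, inf_eq_right.mpr le_sup_left]
  have hQ : Submodule.map (p ⊔ q).subtype Q = q := by
    rw [Submodule.map_comap_subtype, inf_eq_right.mpr le_sup_right]
  have hc : IsCompl P Q := by
    constructor
    · rw [disjoint_iff]
      apply Submodule.map_injective_of_injective hinj
      rw [Submodule.map_inf _ hinj, hP, hQ, hd, Submodule.map_bot]
    · rw [codisjoint_iff]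
      apply Submodule.map_injective_of_injective hinj
      rw [Submodule.map_sup, hP, hQ, Submodule.map_top, Submodule.range_subtype]
  exact (Submodule.prodEquivOfIsCompl P Q hc).symm.trans
    (LinearEquiv.prodCongr (Submodule.comapSubtypeEquivOfLe le_sup_left)
      (Submodule.comapSubtypeEquivOfLe le_sup_right))

/-- Key step: `S/(S ⊓ ker h)` is projective. -/
theorem aux_quot_proj {R M N : Type*} [Ring R] [AddCommGroup M] [Module R M]
    [AddCommGroup N] [Module R N] [Module.Projective R N]
    (h : M →ₗ[R] N) (hh : Function.Surjective h) (S : Submodule R M)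
    (hc : Module.Projective R (M ⧸ (S ⊔ LinearMap.ker h))) :
    Module.Projective R (↥S ⧸ ((S ⊓ LinearMap.ker h).comap S.subtype)) := by
  set W := S.map h with hW
  have hφker : LinearMap.ker (W.mkQ ∘ₗ h) = S ⊔ LinearMap.ker h := by
    rw [LinearMap.ker_comp, Submodule.ker_mkQ, hW, Submodule.comap_map_eq]
  have hφsurj : Function.Surjective (W.mkQ ∘ₗ h) := W.mkQ_surjective.comp hh
  have e : (M ⧸ (S ⊔ LinearMap.ker h)) ≃ₗ[R] (N ⧸ W) :=
    (Submodule.quotEquivOfEq _ _ hφker.symm).trans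
      ((W.mkQ ∘ₗ h).quotKerEquivOfSurjective hφsurj)
  haveI hNW : Module.Projective R (N ⧸ W) := Module.Projective.of_equiv e
  obtain ⟨W', hW'⟩ := aux_exists_isCompl W hNW
  haveI hWproj : Module.Projective R W := aux_proj_of_isCompl W W' hW'
  set ψ : ↥S →ₗ[R] N := h ∘ₗ S.subtype with hψ
  have hker : LinearMap.ker ψ = (S ⊓ LinearMap.ker h).comap S.subtype := by
    rw [hψ, LinearMap.ker_comp, Submodule.comap_inf, Submodule.comap_subtype_self, top_inf_eq]
  have hrange : LinearMap.range ψ = W := by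
    rw [hψ, LinearMap.range_comp, Submodule.range_subtype]
  exact Module.Projective.of_equiv (M := W)
    (((Submodule.quotEquivOfEq _ _ hker.symm).trans
      (ψ.quotKerEquivRange.trans (LinearEquiv.ofEq _ _ hrange))).symm)

set_option maxHeartbeats 1600000 in
/-- Case 3 of the A₃ decomposition: two surjections g : F₂ → F₁ and
h : F₂ → F₃ with F₂/(ker g + ker h) projective.  The subquotients
ker g/(ker g ∩ ker h) and ker h/(ker g ∩ ker h) are projective, and
F₂ = (ker g ∩ ker h) ⊕ G ⊕ K ⊕ H with ker g = (ker g ∩ ker h) ⊕ G,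
ker h = (ker g ∩ ker h) ⊕ K, F₁ ≅ K ⊕ H and F₃ ≅ G ⊕ H. -/
theorem stmt_16 {R : Type*} [Ring R] [IsNoetherianRing R]
    {F₁ F₂ F₃ : Type*} [AddCommGroup F₁] [Module R F₁] [AddCommGroup F₂] [Module R F₂]
    [AddCommGroup F₃] [Module R F₃]
    [Module.Finite R F₁] [Module.Finite R F₂] [Module.Finite R F₃]
    [Module.Projective R F₁] [Module.Projective R F₂] [Module.Projective R F₃]
    (g : F₂ →ₗ[R] F₁) (h : F₂ →ₗ[R] F₃)
    (hg : Function.Surjective g) (hh : Function.Surjective h)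
    (hcoker : Module.Projective R (F₂ ⧸ (LinearMap.ker g ⊔ LinearMap.ker h))) :
    Module.Projective R (↥(LinearMap.ker g) ⧸
      ((LinearMap.ker g ⊓ LinearMap.ker h).comap (LinearMap.ker g).subtype)) ∧
    Module.Projective R (↥(LinearMap.ker h) ⧸
      ((LinearMap.ker g ⊓ LinearMap.ker h).comap (LinearMap.ker h).subtype)) ∧
    ∃ G K H : Submodule R F₂,
      DirectSum.IsInternal ![LinearMap.ker g ⊓ LinearMap.ker h, G, K, H] ∧
      LinearMap.ker g = (LinearMap.ker g ⊓ LinearMap.ker h) ⊔ G ∧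
      LinearMap.ker h = (LinearMap.ker g ⊓ LinearMap.ker h) ⊔ K ∧
      Nonempty (F₁ ≃ₗ[R] (K × H)) ∧ Nonempty (F₃ ≃ₗ[R] (G × H)) := by
  set S := LinearMap.ker g with hS
  set T := LinearMap.ker h with hT
  set N := S ⊓ T with hN
  -- projectivity of the two subquotients
  have projS : Module.Projective R (↥S ⧸ (N.comap S.subtype)) := by
    rw [hN]
    exact aux_quot_proj h hh S hcoker
  have projT : Module.Projective R (↥T ⧸ (N.comap T.subtype)) := by
    have : N = T ⊓ LinearMap.ker g := by rw [hN, inf_comm]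
    rw [this]
    refine aux_quot_proj g hg T (Module.Projective.of_equiv
      (Submodule.quotEquivOfEq _ _ ?_) (M := F₂ ⧸ (S ⊔ T)))
    rw [hS, sup_comm]
  refine ⟨projS, projT, ?_⟩
  -- complements
  obtain ⟨H, hHc⟩ := aux_exists_isCompl _ hcoker
  obtain ⟨G₀, hG₀⟩ := aux_exists_isCompl _ projS
  obtain ⟨K₀, hK₀⟩ := aux_exists_isCompl _ projT
  set G := G₀.map S.subtype with hGdef
  set K := K₀.map T.subtype with hKdef
  have hNS : N ≤ S := by rw [hN]; exact inf_le_left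
  have hNT : N ≤ T := by rw [hN]; exact inf_le_right
  clear_value N T S
  have hGS : G ≤ S := by rw [hGdef]; exact Submodule.map_subtype_le _ _
  have hKT : K ≤ T := by rw [hKdef]; exact Submodule.map_subtype_le _ _
  have hSinj : Function.Injective S.subtype := Subtype.coe_injective
  have hTinj : Function.Injective T.subtype := Subtype.coe_injective
  have hmapN_S : Submodule.map S.subtype (N.comap S.subtype) = N := by
    rw [Submodule.map_comap_subtype, inf_eq_right.mpr hNS]
  have hmapN_T : Submodule.map T.subtype (N.comap T.subtype) = N := by
    rw [Submodule.map_comap_subtype, inf_eq_right.mpr hNT]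
  have hNG : N ⊔ G = S := by
    have := congrArg (Submodule.map S.subtype) (codisjoint_iff.mp hG₀.codisjoint)
    rwa [Submodule.map_sup, hmapN_S, Submodule.map_top, Submodule.range_subtype, ← hGdef] at this
  have hNK : N ⊔ K = T := by
    have := congrArg (Submodule.map T.subtype) (codisjoint_iff.mp hK₀.codisjoint)
    rwa [Submodule.map_sup, hmapN_T, Submodule.map_top, Submodule.range_subtype, ← hKdef] at this
  have hNGd : N ⊓ G = ⊥ := by
    have := congrArg (Submodule.map S.subtype) (disjoint_iff.mp hG₀.disjoint)
    rwa [Submodule.map_inf _ hSinj, hmapN_S, Submodule.map_bot, ← hGdef] at this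
  have hNKd : N ⊓ K = ⊥ := by
    have := congrArg (Submodule.map T.subtype) (disjoint_iff.mp hK₀.disjoint)
    rwa [Submodule.map_inf _ hTinj, hmapN_T, Submodule.map_bot, ← hKdef] at this
  have hGTd : G ⊓ T = ⊥ := by
    have h1 : G ⊓ T ≤ N := by rw [hN]; exact inf_le_inf_right T hGS
    have : G ⊓ T ≤ N ⊓ G := le_inf h1 inf_le_left
    exact le_bot_iff.mp (hNGd ▸ this)
  have hKSd : K ⊓ S = ⊥ := by
    have h1 : K ⊓ S ≤ N := by rw [hN]; exact le_inf inf_le_right (inf_le_left.trans hKT)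
    have : K ⊓ S ≤ N ⊓ K := le_inf h1 inf_le_left
    exact le_bot_iff.mp (hNKd ▸ this)
  have hHST : (S ⊔ T) ⊓ H = ⊥ := disjoint_iff.mp hHc.disjoint
  have hHtop : (S ⊔ T) ⊔ H = ⊤ := codisjoint_iff.mp hHc.codisjoint
  have hSK : S ⊔ K = S ⊔ T := by
    refine le_antisymm (sup_le le_sup_left (hKT.trans le_sup_right)) ?_
    refine sup_le le_sup_left ?_
    rw [← hNK]
    exact sup_le ((hNS.trans le_sup_left)) le_sup_right
  have hTG : T ⊔ G = S ⊔ T := by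
    refine le_antisymm (sup_le le_sup_right (hGS.trans le_sup_left)) ?_
    refine sup_le ?_ le_sup_left
    rw [← hNG]
    exact sup_le ((hNT.trans le_sup_left)) le_sup_right
  -- modular lattice computations
  have hHST' : H ⊓ (S ⊔ T) = ⊥ := by rw [inf_comm]; exact hHST
  have m1 : (K ⊔ H) ⊓ (S ⊔ T) = K := by
    rw [sup_inf_assoc_of_le H (hKT.trans le_sup_right), hHST', sup_bot_eq]
  have m2 : (G ⊔ H) ⊓ (S ⊔ T) = G := by
    rw [sup_inf_assoc_of_le H (hGS.trans le_sup_left), hHST', sup_bot_eq]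
  have m3 : (S ⊔ H) ⊓ (S ⊔ T) = S := by
    rw [sup_inf_assoc_of_le H le_sup_left, hHST', sup_bot_eq]
  have hSKH : S ⊓ (K ⊔ H) = ⊥ := by
    have : S ⊓ (K ⊔ H) = S ⊓ ((K ⊔ H) ⊓ (S ⊔ T)) :=
      le_antisymm (le_inf inf_le_left (le_inf inf_le_right (inf_le_left.trans le_sup_left)))
        (le_inf inf_le_left (inf_le_right.trans inf_le_left))
    rw [this, m1, inf_comm, hKSd]
  have hTGH : T ⊓ (G ⊔ H) = ⊥ := by
    have : T ⊓ (G ⊔ H) = T ⊓ ((G ⊔ H) ⊓ (S ⊔ T)) :=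
      le_antisymm (le_inf inf_le_left (le_inf inf_le_right (inf_le_left.trans le_sup_right)))
        (le_inf inf_le_left (inf_le_right.trans inf_le_left))
    rw [this, m2, inf_comm, hGTd]
  have hTSH : T ⊓ (S ⊔ H) = N := by
    have : T ⊓ (S ⊔ H) = T ⊓ ((S ⊔ H) ⊓ (S ⊔ T)) :=
      le_antisymm (le_inf inf_le_left (le_inf inf_le_right (inf_le_left.trans le_sup_right)))
        (le_inf inf_le_left (inf_le_right.trans inf_le_left))
    rw [this, m3, hN, inf_comm]
  have hKSH : K ⊓ (S ⊔ H) = ⊥ := by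
    have h1 : K ⊓ (S ⊔ H) ≤ N := by rw [← hTSH]; exact inf_le_inf_right _ hKT
    have : K ⊓ (S ⊔ H) ≤ N ⊓ K := le_inf h1 inf_le_left
    exact le_bot_iff.mp (hNKd ▸ this)
  have hNGKH : N ⊓ (G ⊔ (K ⊔ H)) = ⊥ := by
    have hkey : S ⊓ (G ⊔ (K ⊔ H)) = G := by
      rw [inf_comm, sup_inf_assoc_of_le (K ⊔ H) hGS, inf_comm (K ⊔ H) S, hSKH, sup_bot_eq]
    have h1 : N ⊓ (G ⊔ (K ⊔ H)) ≤ G :=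
      le_trans (inf_le_inf_right _ hNS) (le_of_eq hkey)
    have : N ⊓ (G ⊔ (K ⊔ H)) ≤ N ⊓ G := le_inf inf_le_left h1
    exact le_bot_iff.mp (hNGd ▸ this)
  have hGTH : G ⊓ (T ⊔ H) = ⊥ := by
    have m4 : (T ⊔ H) ⊓ (S ⊔ T) = T := by
      rw [sup_inf_assoc_of_le H le_sup_right, hHST', sup_bot_eq]
    have : G ⊓ (T ⊔ H) = G ⊓ ((T ⊔ H) ⊓ (S ⊔ T)) :=
      le_antisymm
        (le_inf inf_le_left (le_inf inf_le_right ((inf_le_left.trans hGS).trans le_sup_left)))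
        (le_inf inf_le_left (inf_le_right.trans inf_le_left))
    rw [this, m4, hGTd]
  refine ⟨G, K, H, ?_, hNG.symm, hNK.symm, ?_, ?_⟩
  · -- internal direct sum
    rw [DirectSum.isInternal_submodule_iff_iSupIndep_and_iSup_eq_top]
    constructor
    · rw [iSupIndep_def]
      intro i
      have hbound : ∀ (A : Submodule R F₂), (∀ j : Fin 4, j ≠ i → ![N, G, K, H] j ≤ A) →
          (⨆ (j) (_ : j ≠ i), ![N, G, K, H] j) ≤ A := fun A hA =>
        iSup_le fun j => iSup_le fun hj => hA j hj
      fin_cases i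
      · refine Disjoint.mono_right (hbound (G ⊔ (K ⊔ H)) ?_) (disjoint_iff.mpr hNGKH)
        intro j hj
        fin_cases j
        · exact absurd rfl hj
        · exact le_sup_left
        · exact le_sup_right.trans' le_sup_left |>.trans_eq rfl
        · exact (le_sup_right.trans le_sup_right)
      · refine Disjoint.mono_right (hbound (T ⊔ H) ?_) (disjoint_iff.mpr hGTH)
        intro j hj
        fin_cases j
        · exact hNT.trans le_sup_left
        · exact absurd rfl hj
        · exact hKT.trans le_sup_left
        · exact le_sup_right
      · refine Disjoint.mono_right (hbound (S ⊔ H) ?_) (disjoint_iff.mpr hKSH)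
        intro j hj
        fin_cases j
        · exact hNS.trans le_sup_left
        · exact hGS.trans le_sup_left
        · exact absurd rfl hj
        · exact le_sup_right
      · refine Disjoint.mono_right (hbound (S ⊔ T) ?_) (disjoint_iff.mpr hHST')
        intro j hj
        fin_cases j
        · exact hNS.trans le_sup_left
        · exact hGS.trans le_sup_left
        · exact hKT.trans le_sup_right
        · exact absurd rfl hj
    · apply le_antisymm le_top
      rw [← hHtop]
      refine sup_le (sup_le ?_ ?_) ?_
      · rw [← hNG]
        exact sup_le ((le_iSup ![N, G, K, H] 0).trans_eq' rfl)
          ((le_iSup ![N, G, K, H] 1).trans_eq' rfl)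
      · rw [← hNK]
        exact sup_le ((le_iSup ![N, G, K, H] 0).trans_eq' rfl)
          ((le_iSup ![N, G, K, H] 2).trans_eq' rfl)
      · exact (le_iSup ![N, G, K, H] 3).trans_eq' rfl
  · -- F₁ ≃ K × H
    have hc : IsCompl S (K ⊔ H) := by
      constructor
      · exact disjoint_iff.mpr hSKH
      · rw [codisjoint_iff, ← sup_assoc, hSK]; exact hHtop
    have hKHd : K ⊓ H = ⊥ := by
      have : K ⊓ H ≤ (S ⊔ T) ⊓ H :=
        inf_le_inf_right H (hKT.trans le_sup_right)
      exact le_bot_iff.mp (hHST ▸ this)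
    rw [hS] at hc
    exact ⟨((g.quotKerEquivOfSurjective hg).symm.trans
      (Submodule.quotientEquivOfIsCompl _ (K ⊔ H) hc)).trans (auxSupEquivProd K H hKHd)⟩
  · -- F₃ ≃ G × H
    have hc : IsCompl T (G ⊔ H) := by
      constructor
      · exact disjoint_iff.mpr hTGH
      · rw [codisjoint_iff, ← sup_assoc, hTG]; exact hHtop
    have hGHd : G ⊓ H = ⊥ := by
      have : G ⊓ H ≤ (S ⊔ T) ⊓ H :=
        inf_le_inf_right H (hGS.trans le_sup_left)
      exact le_bot_iff.mp (hHST ▸ this)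
    rw [hT] at hc
    exact ⟨((h.quotKerEquivOfSurjective hh).symm.trans
      (Submodule.quotientEquivOfIsCompl _ (G ⊔ H) hc)).trans (auxSupEquivProd G H hGHd)⟩
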